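/- Let S be a hyponormal unilateral weighted shift on H with nonzero weight sequence (α_n)_{n≥1} and M = lim_{n→∞} |α_n|. Then the approximate point spectrum of the adjoint S* is the whole closed disk {λ ∈ ℂ : |λ| ≤ M}; that is, λI − S* fails to be bounded below if and only if |λ| ≤ M. -/

import Mathlib

open ContinuousLinearMap

local notation "⟪" x ", " y "⟫" => @inner ℂ _ _ x y

lemma my_parseval {H : Type*} [NormedAddCommGroup H] [InnerProductSpace ℂ H] [CompleteSpace H]
    (e : HilbertBasis ℕ ℂ H) (y : H) : HasSum (fun k => ‖⟪e k, y⟫‖ ^ 2) (‖y‖ ^ 2) := by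
  have h := (e.hasSum_inner_mul_inner y y).mapL Complex.reCLM
  have h1 : ∀ v : H, Complex.reCLM (⟪y, v⟫ * ⟪v, y⟫) = ‖⟪v, y⟫‖ ^ 2 := by
    intro v
    have hc : ⟪y, v⟫ = (starRingEnd ℂ) ⟪v, y⟫ := (inner_conj_symm y v).symm
    rw [hc]
    set z := ⟪v, y⟫ with hz
    simp only [Complex.reCLM_apply, Complex.sq_norm,
      Complex.normSq_apply, Complex.mul_re, Complex.conj_re, Complex.conj_im]
    ring
  have h2 : Complex.reCLM ⟪y, y⟫ = ‖y‖ ^ 2 := by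
    simpa using inner_self_eq_norm_sq (𝕜 := ℂ) y
  rw [h2] at h
  simpa [h1] using h

lemma my_adj_coord {H : Type*} [NormedAddCommGroup H] [InnerProductSpace ℂ H] [CompleteSpace H]
    (e : HilbertBasis ℕ ℂ H) (α : ℕ → ℂ) (S : H →L[ℂ] H)
    (hS : ∀ n : ℕ, S (e n) = α n • e (n + 1)) (x : H) (k : ℕ) :
    ⟪e k, ContinuousLinearMap.adjoint S x⟫ = (starRingEnd ℂ) (α k) * ⟪e (k+1), x⟫ := by
  rw [ContinuousLinearMap.adjoint_inner_right, hS k, inner_smul_left]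

lemma my_norm_bound {H : Type*} [NormedAddCommGroup H] [InnerProductSpace ℂ H] [CompleteSpace H]
    (e : HilbertBasis ℕ ℂ H) (α : ℕ → ℂ) (S : H →L[ℂ] H)
    (hS : ∀ n : ℕ, S (e n) = α n • e (n + 1))
    (M : ℝ) (hM0 : 0 ≤ M) (hle : ∀ n, ‖α n‖ ≤ M) (x : H) :
    ‖ContinuousLinearMap.adjoint S x‖ ≤ M * ‖x‖ := by
  have hA := my_parseval e x
  have hB := my_parseval e (ContinuousLinearMap.adjoint S x)
  have hBsum : ∀ k, ‖⟪e k, ContinuousLinearMap.adjoint S x⟫‖ ^ 2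
      = ‖α k‖ ^ 2 * ‖⟪e (k+1), x⟫‖ ^ 2 := by
    intro k
    rw [my_adj_coord e α S hS x k, norm_mul, mul_pow, RCLike.norm_conj]
  -- summability of shifted
  have hshift : Summable (fun k => ‖⟪e (k+1), x⟫‖ ^ 2) :=
    (hA.summable).comp_injective (add_left_injective 1)
  have hg : Summable (fun k => M ^ 2 * ‖⟪e (k+1), x⟫‖ ^ 2) := hshift.mul_left _
  have step1 : ‖ContinuousLinearMap.adjoint S x‖ ^ 2
      ≤ ∑' k, M ^ 2 * ‖⟪e (k+1), x⟫‖ ^ 2 := by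
    rw [← hB.tsum_eq]
    refine Summable.tsum_le_tsum (fun k => ?_) hB.summable hg
    rw [hBsum k]
    have := hle k
    have h1 : ‖α k‖ ^ 2 ≤ M ^ 2 := by nlinarith [norm_nonneg (α k)]
    exact mul_le_mul_of_nonneg_right h1 (by positivity)
  have step2 : ∑' k, M ^ 2 * ‖⟪e (k+1), x⟫‖ ^ 2 ≤ M ^ 2 * ‖x‖ ^ 2 := by
    rw [tsum_mul_left, ← hA.tsum_eq]
    refine mul_le_mul_of_nonneg_left ?_ (by positivity)
    refine Summable.tsum_le_tsum_of_inj (fun k => k + 1) (add_left_injective 1)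
      (fun c _ => by positivity) (fun k => le_refl _) hshift hA.summable
  have hsq : ‖ContinuousLinearMap.adjoint S x‖ ^ 2 ≤ (M * ‖x‖) ^ 2 := by
    calc _ ≤ _ := step1
    _ ≤ M ^ 2 * ‖x‖ ^ 2 := step2
    _ = (M * ‖x‖) ^ 2 := by ring
  nlinarith [norm_nonneg (ContinuousLinearMap.adjoint S x), mul_nonneg hM0 (norm_nonneg x)]
lemma my_eigen {H : Type*} [NormedAddCommGroup H] [InnerProductSpace ℂ H] [CompleteSpace H]
    (e : HilbertBasis ℕ ℂ H) (α : ℕ → ℂ) (S : H →L[ℂ] H)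
    (hS : ∀ n : ℕ, S (e n) = α n • e (n + 1))
    (hnz : ∀ n : ℕ, α n ≠ 0)
    (M : ℝ) (hM : Filter.Tendsto (fun n : ℕ => ‖α n‖) Filter.atTop (nhds M))
    (μ : ℂ) (hμ : ‖μ‖ < M) :
    ∃ x : H, x ≠ 0 ∧ ContinuousLinearMap.adjoint S x = μ • x := by
  set c : ℕ → ℂ := fun n => Nat.rec 1 (fun n cn => μ * cn / ((starRingEnd ℂ) (α n))) n with hc
  have hc0 : c 0 = 1 := rfl
  have hcs : ∀ n, c (n + 1) = μ * c n / ((starRingEnd ℂ) (α n)) := fun n => rfl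
  have hcnz : ∀ n, (starRingEnd ℂ) (α n) ≠ 0 := fun n => by
    simpa using hnz n
  have hkey : ∀ n, (starRingEnd ℂ) (α n) * c (n + 1) = μ * c n := by
    intro n
    rw [hcs n, mul_div_assoc']
    exact mul_div_cancel_left₀ _ (hcnz n)
  -- summability
  set r : ℝ := (‖μ‖ + M) / 2 with hr
  have hμr : ‖μ‖ < r := by rw [hr]; linarith
  have hrM : r < M := by rw [hr]; linarith
  have hr0 : 0 < r := lt_of_le_of_lt (norm_nonneg μ) hμr
  have hev : ∀ᶠ n in Filter.atTop, r ≤ ‖α n‖ := hM.eventually (eventually_ge_nhds hrM)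
  have hratio : ∀ᶠ n in Filter.atTop, ‖‖c (n+1)‖ ^ 2‖ ≤ (‖μ‖ / r) ^ 2 * ‖‖c n‖ ^ 2‖ := by
    filter_upwards [hev] with n hn
    have hα0 : (0:ℝ) < ‖α n‖ := lt_of_lt_of_le hr0 hn
    have h1 : ‖c (n+1)‖ = ‖μ‖ * ‖c n‖ / ‖α n‖ := by
      rw [hcs n, norm_div, norm_mul, RCLike.norm_conj]
    have h2 : ‖c (n+1)‖ ≤ (‖μ‖ / r) * ‖c n‖ := by
      rw [h1, div_le_iff₀ hα0]
      rw [div_mul_eq_mul_div, div_mul_eq_mul_div, le_div_iff₀ hr0]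
      have : ‖μ‖ * ‖c n‖ * r ≤ ‖μ‖ * ‖c n‖ * ‖α n‖ :=
        mul_le_mul_of_nonneg_left hn (by positivity)
      linarith
    rw [Real.norm_of_nonneg (by positivity), Real.norm_of_nonneg (by positivity)]
    calc ‖c (n+1)‖ ^ 2 ≤ ((‖μ‖ / r) * ‖c n‖) ^ 2 := by
          have := norm_nonneg (c (n+1))
          nlinarith [norm_nonneg (c n), div_nonneg (norm_nonneg μ) hr0.le]
      _ = (‖μ‖ / r) ^ 2 * ‖c n‖ ^ 2 := by ring
  have hq : (‖μ‖ / r) ^ 2 < 1 := by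
    have h1 : ‖μ‖ / r < 1 := (div_lt_one hr0).mpr hμr
    have h0 : 0 ≤ ‖μ‖ / r := div_nonneg (norm_nonneg μ) hr0.le
    nlinarith
  have hsum : Summable (fun n => ‖c n‖ ^ 2) :=
    summable_of_ratio_norm_eventually_le hq hratio
  have hmem : Memℓp c 2 := by
    apply memℓp_gen
    have h2 : ∀ z : ℝ, z ^ ((2:ENNReal).toReal) = z ^ (2:ℕ) := fun z => by
      rw [ENNReal.toReal_ofNat, show ((2:ℝ)) = ((2:ℕ):ℝ) by norm_num, Real.rpow_natCast]
    exact hsum.congr (fun n => (h2 ‖c n‖).symm)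
  set f : lp (fun _ : ℕ => ℂ) 2 := ⟨c, hmem⟩ with hf
  set x : H := e.repr.symm f with hx
  have hcoord : ∀ k, ⟪e k, x⟫ = c k := by
    intro k
    rw [← e.repr_apply_apply, hx, LinearIsometryEquiv.apply_symm_apply]
  refine ⟨x, ?_, ?_⟩
  · intro h0
    have h1 : ⟪e 0, x⟫ = 1 := by rw [hcoord 0, hc0]
    rw [h0, inner_zero_right] at h1
    exact zero_ne_one h1
  · apply e.repr.injective
    ext k
    rw [e.repr_apply_apply, e.repr_apply_apply, my_adj_coord e α S hS x k,
      hcoord (k+1), hkey k, inner_smul_right, hcoord k]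

/-- The approximate point spectrum of the adjoint of a hyponormal unilateral
weighted shift with nonzero weights is the whole closed disk of radius
`M = lim ‖α n‖`: `λI - S*` fails to be bounded below iff `‖λ‖ ≤ M`. -/
theorem approxPointSpectrum_adjoint_of_hyponormal_unilateral_weighted_shift
    {H : Type*} [NormedAddCommGroup H] [InnerProductSpace ℂ H] [CompleteSpace H]
    (e : HilbertBasis ℕ ℂ H) (α : ℕ → ℂ) (S : H →L[ℂ] H)
    (hS : ∀ n : ℕ, S (e n) = α n • e (n + 1))
    (hmono : ∀ n : ℕ, ‖α n‖ ≤ ‖α (n + 1)‖)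
    (hnz : ∀ n : ℕ, α n ≠ 0)
    (M : ℝ) (hM : Filter.Tendsto (fun n : ℕ => ‖α n‖) Filter.atTop (nhds M)) :
    {lam : ℂ | ¬ ∃ c : ℝ, 0 < c ∧ ∀ x : H,
        c * ‖x‖ ≤ ‖(lam • (1 : H →L[ℂ] H) - ContinuousLinearMap.adjoint S) x‖}
      = {lam : ℂ | ‖lam‖ ≤ M} := by
  have hmono' : Monotone (fun n => ‖α n‖) := monotone_nat_of_le_succ hmono
  have hle : ∀ n, ‖α n‖ ≤ M := fun n => hmono'.ge_of_tendsto hM n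
  have hM0 : 0 < M := lt_of_lt_of_le (norm_pos_iff.mpr (hnz 0)) (hle 0)
  ext lam
  simp only [Set.mem_setOf_eq]
  constructor
  · intro hno
    by_contra hgt
    push_neg at hgt
    refine hno ⟨‖lam‖ - M, by linarith, fun x => ?_⟩
    have h1 : (lam • (1 : H →L[ℂ] H) - ContinuousLinearMap.adjoint S) x
        = lam • x - ContinuousLinearMap.adjoint S x := by
      simp [ContinuousLinearMap.sub_apply]
    rw [h1]
    have h2 := norm_sub_norm_le (lam • x) (ContinuousLinearMap.adjoint S x)
    have h3 : ‖lam • x‖ = ‖lam‖ * ‖x‖ := by rw [norm_smul]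
    have h4 := my_norm_bound e α S hS M hM0.le hle x
    nlinarith [norm_nonneg x]
  · rintro hlam ⟨cc, hcc, hb⟩
    set ε : ℝ := min (1/2) (cc / (‖lam‖ + 1)) with hε
    have hL0 : (0:ℝ) < ‖lam‖ + 1 := by positivity
    have hε0 : 0 < ε := lt_min (by norm_num) (div_pos hcc hL0)
    have hε1 : ε < 1 := lt_of_le_of_lt (min_le_left _ _) (by norm_num)
    set μ : ℂ := ((1 - ε : ℝ) : ℂ) * lam with hμ
    have hμM : ‖μ‖ < M := by
      have h1 : ‖μ‖ = (1 - ε) * ‖lam‖ := by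
        rw [hμ, norm_mul, Complex.norm_real, Real.norm_of_nonneg (by linarith)]
      rw [h1]
      nlinarith [norm_nonneg lam]
    obtain ⟨x, hx0, hxe⟩ := my_eigen e α S hS hnz M hM μ hμM
    have hx : (lam • (1 : H →L[ℂ] H) - ContinuousLinearMap.adjoint S) x
        = (lam - μ) • x := by
      simp only [ContinuousLinearMap.sub_apply, ContinuousLinearMap.smul_apply,
        ContinuousLinearMap.one_apply, hxe, sub_smul]
    have hbx := hb x
    rw [hx, norm_smul] at hbx
    have hnorm : ‖lam - μ‖ = ε * ‖lam‖ := by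
      have h2 : lam - μ = ((ε : ℝ) : ℂ) * lam := by rw [hμ]; push_cast; ring
      rw [h2, norm_mul, Complex.norm_real, Real.norm_of_nonneg hε0.le]
    have hεc : ε * (‖lam‖ + 1) ≤ cc := by
      have := min_le_right (1/2 : ℝ) (cc / (‖lam‖ + 1))
      calc ε * (‖lam‖ + 1) ≤ (cc / (‖lam‖ + 1)) * (‖lam‖ + 1) :=
            mul_le_mul_of_nonneg_right this hL0.le
        _ = cc := div_mul_cancel₀ _ (ne_of_gt hL0)
    have hεlam : ε * ‖lam‖ < cc := by nlinarith
    have hxpos : 0 < ‖x‖ := norm_pos_iff.mpr hx0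
    rw [hnorm] at hbx
    nlinarith
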